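/- Let G = (N, Δ, π) be an infinite bottleneck congestion game in which every cost function c_f is bounded, i.e., there is a constant bounding c_f(ℓ_f(ξ)) over all ξ ∈ Δ and f ∈ F. Then for every α > 0, G possesses an α-approximate strong Nash equilibrium: a profile ξ ∈ Δ such that there is no nonempty coalition S ⊆ N and ν_S with π_i(ξ) − π_i(ν_S, ξ_{−S}) > α for all i ∈ S. -/

import Mathlib

open Finset

/-- The vector `a` sorted in non-increasing order. -/
noncomputable def sortDesc {α : Type*} [LinearOrder α] {q : ℕ} (a : Fin q → α) : Fin q → α :=
  fun i => a (Tuple.sort a i.rev)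

/-- `a` is strictly sorted-lexicographically smaller than `b`. -/
def SLexLt {α : Type*} [LinearOrder α] {q : ℕ} (a b : Fin q → α) : Prop :=
  ∃ m : Fin q, (∀ i, i < m → sortDesc a i = sortDesc b i) ∧ sortDesc a m < sortDesc b m

/-- Sorted-lexicographic comparison of vectors indexed by an arbitrary finite type. -/
def SLexLtOn {α : Type*} [LinearOrder α] {ι : Type*} [Fintype ι] (a b : ι → α) : Prop :=
  SLexLt (a ∘ (Fintype.equivFin ι).symm) (b ∘ (Fintype.equivFin ι).symm)

/-- An improving move: some nonempty coalition `S` deviates (players outside `S`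
keep their strategies) and every member of `S` strictly decreases her cost. -/
def ImprovingMove {ι : Type*} {X : ι → Type*} {β : Type*} [Preorder β]
    (π : (∀ i, X i) → ι → β) (x y : ∀ i, X i) : Prop :=
  ∃ S : Finset ι, S.Nonempty ∧ (∀ i ∉ S, y i = x i) ∧ ∀ i ∈ S, π y i < π x i

open scoped NNReal

/-- The load of facility `f` under a splittable strategy profile `ξ`:
the sum of all intensities put on pure strategies containing `f`. -/
noncomputable def facLoad {ι F : Type*} [Fintype ι] [Fintype F] [DecidableEq F] {ni : ι → ℕ}
    (strat : ∀ i, Fin (ni i) → Finset F) (ξ : ∀ i, Fin (ni i) → ℝ≥0) (f : F) : ℝ≥0 :=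
  ∑ i, ∑ j ∈ Finset.univ.filter (fun j => f ∈ strat i j), ξ i j

/-- The set `F_i(ξ)` of facilities used by player `i` under profile `ξ`. -/
noncomputable def usedFac {ι F : Type*} [Fintype F] [DecidableEq F] {ni : ι → ℕ}
    (strat : ∀ i, Fin (ni i) → Finset F) (ξ : ∀ i, Fin (ni i) → ℝ≥0) (i : ι) : Finset F :=
  Finset.univ.filter (fun f => ∃ j, f ∈ strat i j ∧ 0 < ξ i j)

/-- The private (bottleneck) cost `π_i(ξ) = max_{f ∈ F_i(ξ)} c_f(ℓ_f(ξ))` of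
player `i` in an infinite bottleneck congestion game. -/
noncomputable def btlCost {ι F : Type*} [Fintype ι] [Fintype F] [DecidableEq F] {ni : ι → ℕ}
    (c : F → ℝ≥0 → ℝ≥0) (strat : ∀ i, Fin (ni i) → Finset F)
    (ξ : ∀ i, Fin (ni i) → ℝ≥0) (i : ι) : ℝ≥0 :=
  (usedFac strat ξ i).sup (fun f => c f (facLoad strat ξ f))

/-- Quantization level of a cost value at granularity `α`. -/
noncomputable def qLvl (α t : ℝ≥0) : ℕ := ⌈t / α⌉₊

/-- Scalar potential: sum of `B ^ (level of player i's cost)`. -/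
noncomputable def potP {ι F : Type*} [Fintype ι] [Fintype F] [DecidableEq F] {ni : ι → ℕ}
    (c : F → ℝ≥0 → ℝ≥0) (strat : ∀ i, Fin (ni i) → Finset F) (α : ℝ≥0) (B : ℕ)
    (ρ : ∀ i, Fin (ni i) → ℝ≥0) : ℕ :=
  ∑ i, B ^ qLvl α (btlCost c strat ρ i)

/-- Every infinite bottleneck congestion game with bounded
facility cost functions possesses an α-approximate strong Nash equilibrium for
every `α > 0`: a feasible profile from which no nonempty coalition can deviate
so that every member decreases her cost by more than `α`. -/
theorem stmt_19 {ι F : Type*} [Fintype ι] [Nonempty ι] [Fintype F] [Nonempty F]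
    [DecidableEq F] {ni : ι → ℕ} (hni : ∀ i, 0 < ni i)
    (strat : ∀ i, Fin (ni i) → Finset F) (hstrat : ∀ i j, (strat i j).Nonempty)
    (d : ι → ℝ≥0) (hd : ∀ i, 0 < d i)
    (c : F → ℝ≥0 → ℝ≥0) (hc : ∀ f, Monotone (c f))
    (hbd : ∃ C : ℝ≥0, ∀ (f : F) (ξ : ∀ i, Fin (ni i) → ℝ≥0),
      (∀ i, ∑ j, ξ i j = d i) → c f (facLoad strat ξ f) ≤ C)
    (α : ℝ≥0) (hα : 0 < α) :
    ∃ ξ : ∀ i, Fin (ni i) → ℝ≥0, (∀ i, ∑ j, ξ i j = d i) ∧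
      ¬ ∃ (ν : ∀ i, Fin (ni i) → ℝ≥0) (S : Finset ι), (∀ i, ∑ j, ν i j = d i) ∧
        S.Nonempty ∧ (∀ i ∉ S, ν i = ξ i) ∧
        ∀ i ∈ S, btlCost c strat ν i + α < btlCost c strat ξ i := by
  classical
  have hα' : α ≠ 0 := hα.ne'
  set n := Fintype.card ι with hn
  set B := n + 1 with hB
  have hB1 : 1 ≤ B := by omega
  set q : ℝ≥0 → ℕ := qLvl α with hqdef
  have qmono : ∀ a b : ℝ≥0, a ≤ b → q a ≤ q b := fun a b h =>
    Nat.ceil_le_ceil (div_le_div_of_nonneg_right h hα.le)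
  set P : (∀ i, Fin (ni i) → ℝ≥0) → ℕ := potP c strat α B with hPdef
  have hne : {k : ℕ | ∃ ρ : ∀ i, Fin (ni i) → ℝ≥0,
      (∀ i, ∑ j, ρ i j = d i) ∧ P ρ = k}.Nonempty := by
    refine ⟨P (fun i j => if j = ⟨0, hni i⟩ then d i else 0),
      fun i j => if j = ⟨0, hni i⟩ then d i else 0, fun i => ?_, rfl⟩
    simp
  obtain ⟨ξ, hfeas, hPξ⟩ := Nat.sInf_mem hne
  refine ⟨ξ, hfeas, ?_⟩
  rintro ⟨ν, S, hνfeas, hS, hout, himp⟩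
  have hmin : sInf {k : ℕ | ∃ ρ : ∀ i, Fin (ni i) → ℝ≥0,
      (∀ i, ∑ j, ρ i j = d i) ∧ P ρ = k} ≤ P ν := Nat.sInf_le ⟨ν, hνfeas, rfl⟩
  have hle : P ξ ≤ P ν := hPξ ▸ hmin
  clear hPξ hmin hne
  -- pick a deviator with maximal old cost
  obtain ⟨i0, hi0S, hmax⟩ := S.exists_max_image (fun i => btlCost c strat ξ i) hS
  set M := btlCost c strat ξ i0 with hM
  set Q := q M with hQ
  have hQ1 : 1 ≤ Q := by
    have h1 : (0:ℝ≥0) < M := lt_of_le_of_lt zero_le (himp i0 hi0S)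
    have : (0:ℝ≥0) < M / α := div_pos h1 hα
    rw [hQ, hqdef]
    exact Nat.ceil_pos.mpr this
  -- key A: anything whose value + α < M has level < Q
  have keyA : ∀ v : ℝ≥0, v + α < M → q v < Q := by
    intro v hv
    have h1 : v / α + 1 ≤ M / α := by
      have := div_le_div_of_nonneg_right hv.le hα.le
      rwa [add_div, div_self hα'] at this
    have h2 : (⌈v / α⌉₊ : ℝ≥0) < M / α :=
      lt_of_lt_of_le (Nat.ceil_lt_add_one zero_le) h1
    exact Nat.lt_ceil.mpr h2
  have devA : ∀ i ∈ S, q (btlCost c strat ν i) < Q := fun i hi =>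
    keyA _ (lt_of_lt_of_le (himp i hi) (hmax i hi))
  -- key B: a facility whose load increased is used by some deviator under ν
  have keyB : ∀ f : F, facLoad strat ξ f < facLoad strat ν f →
      ∃ i ∈ S, f ∈ usedFac strat ν i := by
    intro f hf
    by_contra h
    push_neg at h
    refine absurd hf (not_lt.mpr ?_)
    unfold facLoad
    refine Finset.sum_le_sum fun i _ => ?_
    by_cases hiS : i ∈ S
    · have h2 := h i hiS
      simp only [usedFac, Finset.mem_filter, Finset.mem_univ, true_and, not_exists,
        not_and, not_lt, le_zero_iff] at h2
      have : ∑ j ∈ Finset.univ.filter (fun j => f ∈ strat i j), ν i j = 0 :=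
        Finset.sum_eq_zero fun j hj => h2 j (Finset.mem_filter.mp hj).2
      rw [this]
      exact zero_le
    · rw [hout i hiS]
  -- non-deviators
  have keyD : ∀ k, k ∉ S →
      q (btlCost c strat ν k) ≤ max (q (btlCost c strat ξ k)) (Q - 1) := by
    intro k hk
    have hνk : ν k = ξ k := hout k hk
    have hused : usedFac strat ν k = usedFac strat ξ k := by
      simp [usedFac, hνk]
    rcases (usedFac strat ν k).eq_empty_or_nonempty with he | hne'
    · simp [btlCost, he, hqdef, qLvl]
    · obtain ⟨f, hf, hfe⟩ := Finset.exists_mem_eq_sup (usedFac strat ν k) hne'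
        (fun f => c f (facLoad strat ν f))
      have hb : btlCost c strat ν k = c f (facLoad strat ν f) := hfe
      rw [hb]
      rcases le_or_gt (facLoad strat ν f) (facLoad strat ξ f) with hl | hl
      · have h1 : c f (facLoad strat ν f) ≤ btlCost c strat ξ k := by
          refine le_trans (hc f hl) ?_
          exact Finset.le_sup (f := fun f => c f (facLoad strat ξ f)) (by rwa [hused] at hf)
        exact le_max_of_le_left (qmono _ _ h1)
      · obtain ⟨i, hiS, hfi⟩ := keyB f hl
        have h1 : c f (facLoad strat ν f) ≤ btlCost c strat ν i := Finset.le_sup (f := fun f => c f (facLoad strat ν f)) hfi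
        have h2 : q (c f (facLoad strat ν f)) ≤ Q - 1 := by
          have := lt_of_le_of_lt (qmono _ _ h1) (devA i hiS)
          omega
        exact le_max_of_le_right h2
  -- assemble the potential decrease
  have hBpow : 0 < B ^ (Q - 1) := Nat.pow_pos (by omega)
  have hSsum : ∑ i ∈ S, B ^ q (btlCost c strat ν i) ≤ S.card * B ^ (Q - 1) := by
    rw [← smul_eq_mul, ← Finset.sum_const]
    refine Finset.sum_le_sum fun i hi => ?_
    exact Nat.pow_le_pow_right (by omega) (by have := devA i hi; omega)
  have hCsum : ∑ i ∈ Sᶜ, B ^ q (btlCost c strat ν i) ≤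
      (∑ i ∈ Sᶜ, B ^ q (btlCost c strat ξ i)) + Sᶜ.card * B ^ (Q - 1) := by
    rw [← smul_eq_mul, ← Finset.sum_const, ← Finset.sum_add_distrib]
    refine Finset.sum_le_sum fun i hi => ?_
    have hk := keyD i (Finset.mem_compl.mp hi)
    have h1 : B ^ q (btlCost c strat ν i) ≤ B ^ max (q (btlCost c strat ξ i)) (Q - 1) :=
      Nat.pow_le_pow_right (by omega) hk
    have h2 : B ^ max (q (btlCost c strat ξ i)) (Q - 1) ≤
        B ^ q (btlCost c strat ξ i) + B ^ (Q - 1) := by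
      rcases max_cases (q (btlCost c strat ξ i)) (Q - 1) with ⟨h, _⟩ | ⟨h, _⟩ <;>
        rw [h] <;> omega
    omega
  have hsingle : B ^ Q ≤ ∑ i ∈ S, B ^ q (btlCost c strat ξ i) := by
    have : B ^ Q = B ^ q (btlCost c strat ξ i0) := by rw [hQ, hM]
    rw [this]
    exact Finset.single_le_sum (f := fun i => B ^ q (btlCost c strat ξ i))
      (fun i _ => Nat.zero_le _) hi0S
  have hcard : S.card + Sᶜ.card = n := by
    rw [hn, ← Finset.card_add_card_compl S]
  have hlt : n * B ^ (Q - 1) < B ^ Q := by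
    have h1 : n * B ^ (Q - 1) < B * B ^ (Q - 1) :=
      Nat.mul_lt_mul_of_lt_of_le (by omega) (le_refl _) hBpow
    have h2 : B * B ^ (Q - 1) = B ^ Q := by
      rw [← pow_succ']
      congr 1
      omega
    omega
  have hsplit : ∀ ρ : ∀ i, Fin (ni i) → ℝ≥0,
      P ρ = (∑ i ∈ S, B ^ q (btlCost c strat ρ i)) +
        ∑ i ∈ Sᶜ, B ^ q (btlCost c strat ρ i) := by
    intro ρ
    rw [hPdef, hqdef, potP]
    exact (Finset.sum_add_sum_compl S _).symm
  have hfinal : P ν < P ξ := by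
    rw [hsplit ν, hsplit ξ]
    calc (∑ i ∈ S, B ^ q (btlCost c strat ν i)) + ∑ i ∈ Sᶜ, B ^ q (btlCost c strat ν i)
        ≤ S.card * B ^ (Q - 1) +
          ((∑ i ∈ Sᶜ, B ^ q (btlCost c strat ξ i)) + Sᶜ.card * B ^ (Q - 1)) :=
          Nat.add_le_add hSsum hCsum
      _ = n * B ^ (Q - 1) + ∑ i ∈ Sᶜ, B ^ q (btlCost c strat ξ i) := by
          rw [← hcard]; ring
      _ < B ^ Q + ∑ i ∈ Sᶜ, B ^ q (btlCost c strat ξ i) := by omega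
      _ ≤ (∑ i ∈ S, B ^ q (btlCost c strat ξ i)) + ∑ i ∈ Sᶜ, B ^ q (btlCost c strat ξ i) := by
          omega
  exact absurd hfinal (not_lt.mpr hle)
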